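/- For natural numbers t and k with k ≥ 1, the number of natural numbers n < 2^t satisfying d(α(n)) = k equals the binomial coefficient binomial(t, k+1). -/

import Mathlib

/-- Binary digit sum: the sum of the digits of `n` in base 2. -/
def binaryDigitSum (n : ℕ) : ℕ := (Nat.digits 2 n).sum

/-- `α(n) = (CF₂(n+1) − 1)/2` where `CF₂(m) = m / 2^{ν₂(m)}` is the odd cofactor. -/
def alphaFn (n : ℕ) : ℕ := ((n + 1) / 2 ^ padicValNat 2 (n + 1) - 1) / 2

lemma bds_two_mul (m : ℕ) : binaryDigitSum (2 * m) = binaryDigitSum m := by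
  rcases Nat.eq_zero_or_pos m with rfl | hm
  · simp [binaryDigitSum]
  · unfold binaryDigitSum
    rw [Nat.digits_def' (by norm_num : (1:ℕ) < 2) (by omega)]
    simp [Nat.mul_div_cancel_left _ (by norm_num : 0 < 2), Nat.mul_mod_right]

lemma bds_two_mul_add_one (m : ℕ) :
    binaryDigitSum (2 * m + 1) = binaryDigitSum m + 1 := by
  unfold binaryDigitSum
  rw [Nat.digits_def' (by norm_num : (1:ℕ) < 2) (by omega)]
  have h1 : (2 * m + 1) % 2 = 1 := by omega
  have h2 : (2 * m + 1) / 2 = m := by omega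
  rw [h1, h2]
  simp [add_comm]

lemma bds_two_pow_mul (v m : ℕ) : binaryDigitSum (2 ^ v * m) = binaryDigitSum m := by
  induction v with
  | zero => simp
  | succ v ih =>
    rw [pow_succ, mul_comm (2 ^ v) 2, mul_assoc, bds_two_mul, ih]

lemma bds_pos {m : ℕ} (hm : 0 < m) : 0 < binaryDigitSum m := by
  induction m using Nat.strong_induction_on with
  | _ m ih =>
    rcases Nat.even_or_odd m with ⟨q, hq⟩ | ⟨q, hq⟩
    · subst hq
      rw [← two_mul, bds_two_mul]
      exact ih q (by omega) (by omega)
    · subst hq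
      rw [bds_two_mul_add_one]; omega

lemma bds_alpha (n : ℕ) : binaryDigitSum (alphaFn n) + 1 = binaryDigitSum (n + 1) := by
  have hn : n + 1 ≠ 0 := by omega
  have hfac : (n + 1).factorization 2 = padicValNat 2 (n + 1) :=
    Nat.factorization_def _ Nat.prime_two
  set m := (n + 1) / 2 ^ padicValNat 2 (n + 1) with hm
  have hodd : ¬ 2 ∣ m := by
    have := Nat.not_dvd_ordCompl Nat.prime_two hn
    rwa [hfac] at this
  have hdvd : 2 ^ padicValNat 2 (n + 1) ∣ n + 1 := by
    rw [← hfac]; exact Nat.ordProj_dvd _ _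
  have heq : n + 1 = 2 ^ padicValNat 2 (n + 1) * m := (Nat.mul_div_cancel' hdvd).symm
  have hmpos : 0 < m := by
    rcases Nat.eq_zero_or_pos m with h | h
    · omega
    · exact h
  have hm2 : m = 2 * ((m - 1) / 2) + 1 := by omega
  have halpha : alphaFn n = (m - 1) / 2 := rfl
  rw [halpha, heq, bds_two_pow_mul]
  conv_rhs => rw [hm2]
  rw [bds_two_mul_add_one]

lemma bds_add_pow {t r : ℕ} (hr : r < 2 ^ t) :
    binaryDigitSum (2 ^ t + r) = binaryDigitSum r + 1 := by
  induction t generalizing r with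
  | zero =>
    interval_cases r
    simp [binaryDigitSum]
  | succ t ih =>
    rcases Nat.even_or_odd r with ⟨q, hq⟩ | ⟨q, hq⟩
    · have h1 : 2 ^ (t + 1) + r = 2 * (2 ^ t + q) := by rw [pow_succ]; omega
      have h2 : r = 2 * q := by omega
      rw [h1, bds_two_mul, h2, bds_two_mul,
        ih (by rw [pow_succ] at hr; omega)]
    · have h1 : 2 ^ (t + 1) + r = 2 * (2 ^ t + q) + 1 := by rw [pow_succ]; omega
      have h2 : r = 2 * q + 1 := by omega
      rw [h1, bds_two_mul_add_one, h2, bds_two_mul_add_one,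
        ih (by rw [pow_succ] at hr; omega)]

lemma count_bds (t j : ℕ) :
    ((Finset.range (2 ^ t)).filter (fun n => binaryDigitSum n = j)).card
      = t.choose j := by
  induction t generalizing j with
  | zero =>
    simp only [pow_zero, Finset.range_one]
    rcases Nat.eq_zero_or_pos j with rfl | hj
    · rw [Finset.filter_singleton]; simp [binaryDigitSum]
    · rw [Nat.choose_eq_zero_of_lt (by omega)]
      rw [Finset.card_eq_zero, Finset.filter_eq_empty_iff]
      intro x hx
      simp only [Finset.mem_singleton] at hx
      subst hx
      simp [binaryDigitSum]
      omega
  | succ t ih =>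
    have hsplit : Finset.range (2 ^ (t + 1)) =
        Finset.range (2 ^ t) ∪ (Finset.range (2 ^ t)).image (fun r => 2 ^ t + r) := by
      ext x
      simp only [Finset.mem_union, Finset.mem_range, Finset.mem_image]
      constructor
      · intro hx
        rcases Nat.lt_or_ge x (2 ^ t) with h | h
        · exact Or.inl h
        · exact Or.inr ⟨x - 2 ^ t, by rw [pow_succ] at hx; omega⟩
      · rintro (h | ⟨r, hr, rfl⟩) <;> rw [pow_succ] <;> omega
    have hdisj : Disjoint (Finset.range (2 ^ t))
        ((Finset.range (2 ^ t)).image (fun r => 2 ^ t + r)) := by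
      rw [Finset.disjoint_left]
      intro a ha hb
      simp only [Finset.mem_range] at ha
      simp only [Finset.mem_image, Finset.mem_range] at hb
      omega
    rw [hsplit, Finset.filter_union, Finset.card_union_of_disjoint
      (Finset.disjoint_filter_filter hdisj)]
    have himg : ((Finset.range (2 ^ t)).image (fun r => 2 ^ t + r)).filter
        (fun n => binaryDigitSum n = j)
        = ((Finset.range (2 ^ t)).filter (fun r => binaryDigitSum r + 1 = j)).image
          (fun r => 2 ^ t + r) := by
      ext x
      simp only [Finset.mem_filter, Finset.mem_image, Finset.mem_range]
      constructor
      · rintro ⟨⟨r, hr, rfl⟩, h2⟩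
        exact ⟨r, ⟨hr, by rwa [bds_add_pow hr] at h2⟩, rfl⟩
      · rintro ⟨r, ⟨hr, h2⟩, rfl⟩
        exact ⟨⟨r, hr, rfl⟩, by rwa [bds_add_pow hr]⟩
    rw [himg, Finset.card_image_of_injective _ (add_right_injective (2 ^ t))]
    rcases Nat.eq_zero_or_pos j with rfl | hj
    · have : (Finset.range (2 ^ t)).filter (fun r => binaryDigitSum r + 1 = 0) = ∅ := by
        rw [Finset.filter_eq_empty_iff]; intro x _; omega
      rw [this, ih 0]
      simp
    · obtain ⟨j', rfl⟩ : ∃ j', j = j' + 1 := ⟨j - 1, by omega⟩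
      have : (Finset.range (2 ^ t)).filter (fun r => binaryDigitSum r + 1 = j' + 1)
          = (Finset.range (2 ^ t)).filter (fun r => binaryDigitSum r = j') := by
        apply Finset.filter_congr; intro x _; simp
      rw [this, ih (j' + 1), ih j', Nat.choose_succ_succ']
      omega

/-- `#{n < 2^t : d(α(n)) = k} = C(t, k+1)`. -/
theorem card_dAlpha_eq (t k : ℕ) (hk : 1 ≤ k) :
    {n : ℕ | n < 2 ^ t ∧ binaryDigitSum (alphaFn n) = k}.ncard = t.choose (k + 1) := by
  have hset : {n : ℕ | n < 2 ^ t ∧ binaryDigitSum (alphaFn n) = k}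
      = ↑((Finset.range (2 ^ t)).filter (fun n => binaryDigitSum (n + 1) = k + 1)) := by
    ext n
    simp only [Set.mem_setOf_eq, Finset.coe_filter, Finset.mem_range, Set.mem_setOf_eq]
    constructor
    · rintro ⟨h1, h2⟩
      exact ⟨h1, by rw [← bds_alpha, h2]⟩
    · rintro ⟨h1, h2⟩
      refine ⟨h1, ?_⟩
      have := bds_alpha n
      omega
  rw [hset, Set.ncard_coe_finset]
  rw [← count_bds t (k + 1)]
  refine Finset.card_bij' (fun n _ => n + 1) (fun m _ => m - 1) ?_ ?_ ?_ ?_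
  · intro n hn
    simp only [Finset.mem_filter, Finset.mem_range] at hn ⊢
    refine ⟨?_, hn.2⟩
    rcases Nat.lt_or_ge (n + 1) (2 ^ t) with h | h
    · exact h
    · exfalso
      have hn1 : n + 1 = 2 ^ t := by omega
      have : binaryDigitSum (n + 1) = 1 := by
        rw [hn1, show (2:ℕ) ^ t = 2 ^ t * 1 by ring, bds_two_pow_mul]
        simp [binaryDigitSum]
      omega
  · intro m hm
    simp only [Finset.mem_filter, Finset.mem_range] at hm ⊢
    have hmpos : 0 < m := by
      by_contra h
      have : m = 0 := by omega
      subst this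
      simp [binaryDigitSum] at hm
    refine ⟨by omega, ?_⟩
    rw [Nat.sub_add_cancel hmpos]
    exact hm.2
  · intro n _; show n + 1 - 1 = n; omega
  · intro m hm
    simp only [Finset.mem_filter, Finset.mem_range] at hm
    have hmpos : 0 < m := by
      by_contra h
      have : m = 0 := by omega
      subst this
      simp [binaryDigitSum] at hm
    show m - 1 + 1 = m
    omega
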